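/- Let V be a finite set and let C_l = (v_i, {v_j, v_k}) and C_{l′} = (v_{i′}, {v_{j′}, v_{k′}}) be two betweenness constraints over V whose variable sets {v_i, v_j, v_k} and {v_{i′}, v_{j′}, v_{k′}} are disjoint. Then E[w(C_l, φ)·w(C_{l′}, φ)] = 0, where the expectation is over φ chosen uniformly at random from the 4^{|V|} functions V → {0,1,2,3}. -/

import Mathlib

open scoped Classical

noncomputable section

/-- A betweenness constraint `(v, {x, y})`: a variable together with an unordered pair. -/
abbrev Constraint (V : Type*) := V × Sym2 V

/-- The elements of a betweenness constraint are pairwise distinct. -/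
def IsProperConstraint {V : Type*} (C : Constraint V) : Prop :=
  ∃ x y, C.2 = s(x, y) ∧ x ≠ y ∧ C.1 ≠ x ∧ C.1 ≠ y

/-- A bijection `α : V → {1, …, |V|}` satisfies the constraint `(v, {x, y})` if
`α x < α v < α y` or `α y < α v < α x`. -/
def Satisfies {V : Type*} [Fintype V] (α : V ≃ Fin (Fintype.card V)) (C : Constraint V) : Prop :=
  ∃ x y, C.2 = s(x, y) ∧ α x < α C.1 ∧ α C.1 < α y

/-- The number of constraints of `𝒞` satisfied by `α`. -/
def satCount {V : Type*} [Fintype V] (α : V ≃ Fin (Fintype.card V))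
    (𝒞 : Finset (Constraint V)) : ℕ :=
  (𝒞.filter fun C => Satisfies α C).card

/-- The complete triple of betweenness constraints on `{u, v, w}`. -/
def completeTriple {V : Type*} [DecidableEq V] (u v w : V) : Finset (Constraint V) :=
  {(u, s(v, w)), (v, s(u, w)), (w, s(u, v))}

/-- An instance is irreducible if it contains no complete triple. -/
def IrreducibleInstance {V : Type*} [DecidableEq V] (𝒞 : Finset (Constraint V)) : Prop :=
  ¬ ∃ u v w : V, u ≠ v ∧ u ≠ w ∧ v ≠ w ∧ completeTriple u v w ⊆ 𝒞

/-- The weight `w(C, φ)` of a constraint `(vᵢ, {vⱼ, vₖ})` under `φ : V → {0,1,2,3}`. -/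
def weight {V : Type*} (φ : V → Fin 4) (C : Constraint V) : ℝ :=
  if (C.2.map φ).IsDiag ∧ φ C.1 ∈ C.2.map φ then 0
  else if (C.2.map φ).IsDiag then -1/3
  else if φ C.1 ∈ C.2.map φ then 1/6
  else if ∃ x y : Fin 4, C.2.map φ = s(x, y) ∧ x < φ C.1 ∧ φ C.1 < y then 2/3
  else -1/3

/-- `α` is `φ`-compatible if `φ u < φ v` implies `α u < α v`. -/
def Compatible {V : Type*} [Fintype V] (φ : V → Fin 4)
    (α : V ≃ Fin (Fintype.card V)) : Prop :=
  ∀ u v : V, φ u < φ v → α u < α v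


private lemma aux_exists_iff (a b c : Fin 4) :
    (∃ x y : Fin 4, s(b,c) = s(x,y) ∧ x < a ∧ a < y) ↔ ((b<a∧a<c)∨(c<a∧a<b)) := by
  revert a b c; decide

private def auxg (a b c : Fin 4) : ℤ :=
  if b = c ∧ (a = b ∨ a = c) then 0 else if b = c then -2
  else if a = b ∨ a = c then 1
  else if (b < a ∧ a < c) ∨ (c < a ∧ a < b) then 4 else -2

private lemma aux_wg (a b c : Fin 4) : weight id (a, s(b,c)) = (auxg a b c : ℝ)/6 := by
  simp only [weight, auxg, Sym2.map_id', id_eq, Sym2.isDiag_iff_proj_eq, Sym2.mem_iff,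
    aux_exists_iff]
  split_ifs <;> norm_num

private lemma aux_keyzero :
    ∑ a : Fin 4, ∑ b : Fin 4, ∑ c : Fin 4, weight id (a, s(b,c)) = 0 := by
  have h : (∑ a : Fin 4, ∑ b : Fin 4, ∑ c : Fin 4, auxg a b c) = 0 := by decide
  simp only [aux_wg]
  rw [show ∑ a : Fin 4, ∑ b : Fin 4, ∑ c : Fin 4, ((auxg a b c : ℝ))/6
      = ((∑ a : Fin 4, ∑ b : Fin 4, ∑ c : Fin 4, auxg a b c : ℤ) : ℝ)/6 by
        push_cast; rw [Finset.sum_div]; congr 1; funext; rw [Finset.sum_div]; congr 1;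
        funext; rw [Finset.sum_div], h]
  norm_num

private lemma aux_wmap {V : Type*} (φ : V → Fin 4) (x y z : V) :
    weight φ (x, s(y, z)) = weight id (φ x, s(φ y, φ z)) := by
  simp [weight, Sym2.map_pair_eq]

theorem expectation_product_disjoint_vars
    {V : Type*} [Fintype V] [DecidableEq V]
    (vi vj vk vi' vj' vk' : V)
    (h1 : vi ≠ vj) (h2 : vi ≠ vk) (h3 : vj ≠ vk)
    (h4 : vi' ≠ vj') (h5 : vi' ≠ vk') (h6 : vj' ≠ vk')
    (hdisj : ({vi, vj, vk} : Set V) ∩ {vi', vj', vk'} = ∅) :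
    (∑ φ : V → Fin 4,
        weight φ (vi, s(vj, vk)) * weight φ (vi', s(vj', vk')))
      / 4 ^ Fintype.card V = 0 := by
  have hnot : ∀ x ∈ ({vi', vj', vk'} : Set V), ¬ (x = vi ∨ x = vj ∨ x = vk) := by
    intro x hx h
    have : x ∈ ({vi, vj, vk} : Set V) ∩ {vi', vj', vk'} := by
      refine ⟨?_, hx⟩
      rcases h with h | h | h <;> simp [h]
    rw [hdisj] at this; exact this
  set p : V → Prop := fun x => x = vi ∨ x = vj ∨ x = vk with hp
  have hi : p vi := Or.inl rfl
  have hj : p vj := Or.inr (Or.inl rfl)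
  have hk : p vk := Or.inr (Or.inr rfl)
  have hi' : ¬ p vi' := hnot vi' (by simp)
  have hj' : ¬ p vj' := hnot vj' (by simp)
  have hk' : ¬ p vk' := hnot vk' (by simp)
  let e : ({x // p x} → Fin 4) × ({x // ¬ p x} → Fin 4) ≃ (V → Fin 4) :=
    (Equiv.sumArrowEquivProdArrow _ _ _).symm.trans
      ((Equiv.sumCompl p).arrowCongr (Equiv.refl _))
  have key : (∑ φ : V → Fin 4,
      weight φ (vi, s(vj, vk)) * weight φ (vi', s(vj', vk'))) = 0 := by
    rw [← Equiv.sum_comp e]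
    rw [Fintype.sum_prod_type]
    have he : ∀ (f : {x // p x} → Fin 4) (g : {x // ¬ p x} → Fin 4) (v : V),
        e (f, g) v = if h : p v then f ⟨v, h⟩ else g ⟨v, h⟩ := by
      intro f g v
      simp only [e, Equiv.trans_apply, Equiv.arrowCongr_apply, Equiv.refl_symm,
        Equiv.coe_refl, Function.comp_apply, id_eq]
      by_cases h : p v
      · rw [dif_pos h, Equiv.sumCompl_symm_apply_of_pos h]
        rfl
      · rw [dif_neg h, Equiv.sumCompl_symm_apply_of_neg h]
        rfl
    have : ∀ f : {x // p x} → Fin 4, ∑ g : {x // ¬ p x} → Fin 4,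
        weight (e (f, g)) (vi, s(vj, vk)) * weight (e (f, g)) (vi', s(vj', vk'))
        = weight id (f ⟨vi, hi⟩, s(f ⟨vj, hj⟩, f ⟨vk, hk⟩)) *
          ∑ g : {x // ¬ p x} → Fin 4,
            weight id (g ⟨vi', hi'⟩, s(g ⟨vj', hj'⟩, g ⟨vk', hk'⟩)) := by
      intro f
      rw [Finset.mul_sum]
      refine Finset.sum_congr rfl fun g _ => ?_
      rw [aux_wmap _ vi vj vk, aux_wmap _ vi' vj' vk']
      simp only [he, dif_pos hi, dif_pos hj, dif_pos hk, dif_neg hi', dif_neg hj',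
        dif_neg hk', id_eq]
    simp only [this, ← Finset.sum_mul]
    have hsum : ∑ f : {x // p x} → Fin 4,
        weight id (f ⟨vi, hi⟩, s(f ⟨vj, hj⟩, f ⟨vk, hk⟩)) = 0 := by
      let E : ({x // p x} → Fin 4) ≃ Fin 4 × Fin 4 × Fin 4 :=
        { toFun := fun f => (f ⟨vi, hi⟩, f ⟨vj, hj⟩, f ⟨vk, hk⟩)
          invFun := fun t x => if x.1 = vi then t.1 else if x.1 = vj then t.2.1 else t.2.2
          left_inv := by
            intro f; funext x
            rcases x with ⟨x, hx⟩
            rcases hx with h | h | h <;> subst h <;>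
              simp [h1, h2, h3, h1.symm, h2.symm, h3.symm]
          right_inv := by
            intro ⟨a, b, c⟩
            simp [h1, h2, h3, h1.symm, h2.symm, h3.symm] }
      rw [← Equiv.sum_comp E.symm]
      rw [Fintype.sum_prod_type]
      have hE : ∀ a b c : Fin 4, (E.symm (a, b, c)) ⟨vi, hi⟩ = a ∧
          (E.symm (a, b, c)) ⟨vj, hj⟩ = b ∧ (E.symm (a, b, c)) ⟨vk, hk⟩ = c := by
        intro a b c
        simp [E, h1, h2, h3, h1.symm, h2.symm, h3.symm]
      calc ∑ a : Fin 4, ∑ t : Fin 4 × Fin 4, weight id ((E.symm (a, t.1, t.2)) ⟨vi, hi⟩,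
              s((E.symm (a, t.1, t.2)) ⟨vj, hj⟩, (E.symm (a, t.1, t.2)) ⟨vk, hk⟩))
          = ∑ a : Fin 4, ∑ t : Fin 4 × Fin 4, weight id (a, s(t.1, t.2)) := by
            refine Finset.sum_congr rfl fun a _ => Finset.sum_congr rfl fun t _ => ?_
            rw [(hE a t.1 t.2).1, (hE a t.1 t.2).2.1, (hE a t.1 t.2).2.2]
        _ = 0 := by
            rw [← aux_keyzero]
            exact Finset.sum_congr rfl fun a _ => Fintype.sum_prod_type ..
    rw [hsum, zero_mul]
  rw [key, zero_div]

end
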